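/- Let (a_t) and (b_t) be nonnegative real sequences with a_0 = b_0 = 0, and let λ_t = λ_0/(t+1)^ν with λ_0 > 0 and ν ∈ (1/2, 1). Let c, r ∈ (0,1), P ∈ (0,1), and L, C_z, d_l, u, n > 0 be constants. Suppose that for all t ≥ 0: a_{t+1} ≤ (1 − c) a_t + (√n · L · t · λ_t/(t+1)) b_t + 2 d_l λ_t/(t+1), and b_{t+1} ≤ (1 − r + √n · L · C_z · P^t · λ_t/(t+1)) b_t + ((2 − c) C_z P^t + 1/u) a_t + (1/u) a_{t+1} + 2 d_l C_z P^t λ_t/(t+1). Then there exists a constant C > 0 such that a_t + b_t ≤ C/(t+1)^{1+ν} for all t ≥ 0. -/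

import Mathlib

set_option maxHeartbeats 1000000 in
/-- Coupled sensitivity decay estimate from the proof of part 2 of Theorem 2:
under the coupled recursions with stepsize `λ_t = lam₀/(t+1)^ν`, the total sensitivity
`a_t + b_t` decays at rate `O(1/(t+1)^{1+ν})`. -/
theorem stmt8 (a b : ℕ → ℝ) (ha : ∀ t, 0 ≤ a t) (hb : ∀ t, 0 ≤ b t)
    (ha0 : a 0 = 0) (hb0 : b 0 = 0)
    (lam₀ ν : ℝ) (hlam₀ : 0 < lam₀) (hν : ν ∈ Set.Ioo (1 / 2 : ℝ) 1)
    (c r P L Cz dl u n : ℝ)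
    (hc : c ∈ Set.Ioo (0 : ℝ) 1) (hr : r ∈ Set.Ioo (0 : ℝ) 1)
    (hP : P ∈ Set.Ioo (0 : ℝ) 1)
    (hL : 0 < L) (hCz : 0 < Cz) (hdl : 0 < dl) (hu : 0 < u) (hn : 0 < n)
    (hreca : ∀ t : ℕ, a (t + 1) ≤ (1 - c) * a t
      + (Real.sqrt n * L * t * (lam₀ / ((t : ℝ) + 1) ^ ν) / ((t : ℝ) + 1)) * b t
      + 2 * dl * (lam₀ / ((t : ℝ) + 1) ^ ν) / ((t : ℝ) + 1))
    (hrecb : ∀ t : ℕ, b (t + 1) ≤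
      (1 - r + Real.sqrt n * L * Cz * P ^ t * (lam₀ / ((t : ℝ) + 1) ^ ν) / ((t : ℝ) + 1)) * b t
      + ((2 - c) * Cz * P ^ t + 1 / u) * a t + (1 / u) * a (t + 1)
      + 2 * dl * Cz * P ^ t * (lam₀ / ((t : ℝ) + 1) ^ ν) / ((t : ℝ) + 1)) :
    ∃ C : ℝ, 0 < C ∧ ∀ t : ℕ, a t + b t ≤ C / ((t : ℝ) + 1) ^ (1 + ν) := by
  obtain ⟨hν1, hν2⟩ := hν
  obtain ⟨hc0, hc1⟩ := hc
  obtain ⟨hr0, hr1⟩ := hr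
  obtain ⟨hP0, hP1⟩ := hP
  have hsn : 0 < Real.sqrt n := Real.sqrt_pos.2 hn
  set sn := Real.sqrt n with hsn_def
  have hν0 : (0:ℝ) < ν := by linarith
  have h1ν : (0:ℝ) < 1 + ν := by linarith
  have ht1 : ∀ t : ℕ, (0:ℝ) < (t:ℝ) + 1 := fun t => by positivity
  obtain ⟨ψ, hψ_def⟩ : ∃ f : ℕ → ℝ, f = fun t : ℕ => (((t:ℝ) + 1) ^ (1 + ν))⁻¹ :=
    ⟨fun t : ℕ => (((t:ℝ) + 1) ^ (1 + ν))⁻¹, rfl⟩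
  have hψpos : ∀ t, 0 < ψ t := by
    intro t
    have h := Real.rpow_pos_of_pos (ht1 t) (1 + ν)
    simp only [hψ_def]
    positivity
  have hlamψ : ∀ t : ℕ, lam₀ / ((t:ℝ) + 1) ^ ν / ((t:ℝ) + 1) = lam₀ * ψ t := by
    intro t
    simp only [hψ_def]
    rw [Real.rpow_add (ht1 t), Real.rpow_one, div_div]
    ring
  have hψdec : ∀ t : ℕ, ψ (t + 1) ≤ ψ t := by
    intro t
    have h2 : (0:ℝ) < ((t:ℝ) + 1) ^ (1 + ν) := Real.rpow_pos_of_pos (ht1 t) (1 + ν)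
    simp only [hψ_def]
    apply inv_anti₀ h2
    apply Real.rpow_le_rpow (le_of_lt (ht1 t)) (by push_cast; linarith) (le_of_lt h1ν)
  -- constants
  obtain ⟨m, hm_def⟩ : ∃ x : ℝ, x = min (c/2) (r/4) := ⟨_, rfl⟩
  have hm0 : 0 < m := by rw [hm_def]; exact lt_min (by linarith) (by linarith)
  have hmc : m ≤ c/2 := by rw [hm_def]; exact min_le_left _ _
  have hmr : m ≤ r/4 := by rw [hm_def]; exact min_le_right _ _
  have hm2 : m ≤ 1/2 := le_trans hmc (by linarith)
  obtain ⟨uu, huu_def⟩ : ∃ x : ℝ, x = 1 + 2/u := ⟨_, rfl⟩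
  have huu1 : 1 ≤ uu := by
    have : 0 < 2/u := by positivity
    rw [huu_def]; linarith
  have huu0 : 0 < uu := by linarith
  obtain ⟨δ, hδ_def⟩ : ∃ x : ℝ, x = c*r/(32*uu) := ⟨_, rfl⟩
  have hδ0 : 0 < δ := by
    rw [hδ_def]; apply div_pos (mul_pos hc0 hr0); positivity
  obtain ⟨M, hM_def⟩ : ∃ x : ℝ, x = sn*L*lam₀/δ := ⟨_, rfl⟩
  have hM0 : 0 < M := by rw [hM_def]; positivity
  obtain ⟨ε3, hε3_def⟩ : ∃ x : ℝ, x = min (1/(2*Cz)) (r/(4*(sn*L*Cz*lam₀))) := ⟨_, rfl⟩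
  have hε30 : 0 < ε3 := by
    rw [hε3_def]; exact lt_min (by positivity) (by positivity)
  obtain ⟨N₁, hN₁⟩ := exists_nat_ge (3/m)
  obtain ⟨N₂, hN₂⟩ := exists_nat_ge (M^2)
  obtain ⟨N₃, hN₃⟩ := exists_pow_lt_of_lt_one hε30 hP1
  obtain ⟨T, hT_def⟩ : ∃ x : ℕ, x = max N₁ (max N₂ N₃) := ⟨_, rfl⟩
  obtain ⟨K₀, hK₀_def⟩ : ∃ x : ℝ, x = 16*δ*dl*Cz*lam₀/r + 4*dl*lam₀ := ⟨_, rfl⟩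
  have hK₀0 : 0 < K₀ := by rw [hK₀_def]; positivity
  obtain ⟨A, hA_def⟩ : ∃ x : ℝ, x = max (max (4*K₀/c) (a T / ψ T)) (b T / ψ T) := ⟨_, rfl⟩
  have hA1 : 4*K₀/c ≤ A := by
    rw [hA_def]; exact le_trans (le_max_left _ _) (le_max_left _ _)
  have hA2 : a T / ψ T ≤ A := by
    rw [hA_def]; exact le_trans (le_max_right _ _) (le_max_left _ _)
  have hA3 : b T / ψ T ≤ A := by rw [hA_def]; exact le_max_right _ _
  have hA0 : 0 < A := lt_of_lt_of_le (by positivity) hA1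
  obtain ⟨B, hB_def⟩ : ∃ x : ℝ, x = (2/r)*(2*uu*A + 4*dl*Cz*lam₀) := ⟨_, rfl⟩
  have hdCl : 0 < dl*Cz*lam₀ := mul_pos (mul_pos hdl hCz) hlam₀
  have huuA : 0 < uu*A := mul_pos huu0 hA0
  have hB0 : 0 < B := by
    rw [hB_def]
    apply mul_pos (by positivity)
    linarith only [huuA, hdCl]
  have hBr : (r/2)*B = 2*uu*A + 4*dl*Cz*lam₀ := by
    rw [hB_def]; field_simp
  have h2δB : 2*δ*B + 4*dl*lam₀ = c/4*A + K₀ := by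
    have h1 : uu ≠ 0 := ne_of_gt huu0
    have h2 : r ≠ 0 := ne_of_gt hr0
    rw [hK₀_def, hδ_def, hB_def]
    field_simp
    ring
  have hA_key : 2*δ*B + 4*dl*lam₀ ≤ c/2*A := by
    have h4 : 4*K₀ ≤ A*c := (div_le_iff₀ hc0).mp hA1
    linarith only [h2δB, h4]
  have hAB : A ≤ B := by
    have h1 : r*B = 4*(uu*A) + 8*(dl*Cz*lam₀) := by linarith only [hBr]
    have f1 : 0 ≤ (1-r)*B := mul_nonneg (by linarith) hB0.le
    have f2 : 0 ≤ (uu-1)*A := mul_nonneg (by linarith) hA0.le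
    linarith only [h1, f1, f2, hdCl, hA0]
  -- main induction
  have main : ∀ t, T ≤ t → a t ≤ A * ψ t ∧ b t ≤ B * ψ t := by
    intro t ht
    induction t, ht using Nat.le_induction with
    | base =>
      refine ⟨(div_le_iff₀ (hψpos T)).mp hA2, ?_⟩
      have h1 : b T ≤ A * ψ T := (div_le_iff₀ (hψpos T)).mp hA3
      have h2 : A * ψ T ≤ B * ψ T := mul_le_mul_of_nonneg_right hAB (hψpos T).le
      linarith only [h1, h2]
    | succ t ht IH =>
      obtain ⟨iha, ihb⟩ := IH
      have htN₁ : (N₁:ℝ) ≤ (t:ℝ) := by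
        have := le_trans (le_max_left N₁ (max N₂ N₃)) (hT_def ▸ ht)
        exact_mod_cast this
      have htN₂ : (N₂:ℝ) ≤ (t:ℝ) := by
        have := le_trans (le_trans (le_max_left N₂ N₃) (le_max_right N₁ (max N₂ N₃))) (hT_def ▸ ht)
        exact_mod_cast this
      have htN₃ : N₃ ≤ t :=
        le_trans (le_trans (le_max_right N₂ N₃) (le_max_right N₁ (max N₂ N₃))) (hT_def ▸ ht)
      have hPt : P ^ t ≤ ε3 := le_trans (pow_le_pow_of_le_one hP0.le hP1.le htN₃) hN₃.le
      have hPt0 : 0 ≤ P ^ t := by positivity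
      have hPt1' : P ^ t ≤ 1 := pow_le_one₀ hP0.le hP1.le
      have htnn : (0:ℝ) ≤ (t:ℝ) := Nat.cast_nonneg t
      have hp : (0:ℝ) < ((t:ℝ) + 1) ^ ν := Real.rpow_pos_of_pos (ht1 t) ν
      have hp1 : (1:ℝ) ≤ ((t:ℝ) + 1) ^ ν :=
        Real.one_le_rpow (by linarith) hν0.le
      -- the stepsize coefficient bound on the a-recursion coupling
      have hpM : M ≤ ((t:ℝ) + 1) ^ ν := by
        have h1 : ((t:ℝ)+1) ^ ((1:ℝ)/2) ≤ ((t:ℝ)+1) ^ ν :=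
          Real.rpow_le_rpow_of_exponent_le (by linarith) hν1.le
        have h2 : M ≤ Real.sqrt ((t:ℝ)+1) := by
          rw [Real.le_sqrt hM0.le (ht1 t).le]
          linarith only [hN₂, htN₂]
        rw [Real.sqrt_eq_rpow] at h2
        linarith only [h1, h2]
      have hq : sn*L*lam₀ ≤ δ * (((t:ℝ)+1) ^ ν) := by
        rw [hM_def, div_le_iff₀ hδ0] at hpM
        linarith only [hpM]
      have hεt : sn * L * (t:ℝ) * (lam₀ / ((t:ℝ) + 1) ^ ν) / ((t:ℝ) + 1) ≤ δ := by
        rw [show sn * L * (t:ℝ) * (lam₀ / ((t:ℝ) + 1) ^ ν) / ((t:ℝ) + 1)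
            = sn*L*lam₀*(t:ℝ) / ((((t:ℝ)+1) ^ ν) * ((t:ℝ)+1)) from by
          field_simp]
        rw [div_le_iff₀ (by positivity)]
        have hint := mul_le_mul_of_nonneg_right hq htnn
        have hpos : 0 < sn*L*lam₀ := by positivity
        linarith only [hint, hq, hpos]
      have hεt0 : 0 ≤ sn * L * (t:ℝ) * (lam₀ / ((t:ℝ) + 1) ^ ν) / ((t:ℝ) + 1) := by
        positivity
      -- P^t smallness facts
      have hε3a : ε3 ≤ 1/(2*Cz) := by rw [hε3_def]; exact min_le_left _ _
      have hε3b : ε3 ≤ r/(4*(sn*L*Cz*lam₀)) := by rw [hε3_def]; exact min_le_right _ _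
      have hPc1 : (2 - c) * Cz * P ^ t ≤ 1 := by
        have h1 : Cz * P ^ t ≤ Cz * (1/(2*Cz)) :=
          mul_le_mul_of_nonneg_left (le_trans hPt hε3a) hCz.le
        have h2 : Cz * (1/(2*Cz)) = 1/2 := by field_simp
        have h3 : 0 ≤ c * (Cz * P ^ t) :=
          mul_nonneg hc0.le (mul_nonneg hCz.le hPt0)
        rw [h2] at h1
        linarith only [h1, h3]
      have hll : lam₀ / ((t:ℝ) + 1) ^ ν / ((t:ℝ) + 1) ≤ lam₀ := by
        have h1 : lam₀ / ((t:ℝ) + 1) ^ ν ≤ lam₀ := div_le_self hlam₀.le hp1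
        have h2 : lam₀ / ((t:ℝ) + 1) ^ ν / ((t:ℝ) + 1) ≤ lam₀ / ((t:ℝ) + 1) ^ ν :=
          div_le_self (by positivity) (by linarith)
        linarith only [h1, h2]
      have hPc2 : sn * L * Cz * P ^ t * (lam₀ / ((t:ℝ) + 1) ^ ν) / ((t:ℝ) + 1) ≤ r/4 := by
        have heq : sn * L * Cz * P ^ t * (lam₀ / ((t:ℝ) + 1) ^ ν) / ((t:ℝ) + 1)
            = (sn * L * Cz * lam₀) * (P ^ t) * ((lam₀ / ((t:ℝ) + 1) ^ ν / ((t:ℝ) + 1)) / lam₀) := by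
          field_simp
        have h1 : (lam₀ / ((t:ℝ) + 1) ^ ν / ((t:ℝ) + 1)) / lam₀ ≤ 1 :=
          (div_le_one hlam₀).2 hll
        have h2 : (sn * L * Cz * lam₀) * (P ^ t) ≤ (sn * L * Cz * lam₀) * (r/(4*(sn*L*Cz*lam₀))) :=
          mul_le_mul_of_nonneg_left (le_trans hPt hε3b) (by positivity)
        have h3 : (sn * L * Cz * lam₀) * (r/(4*(sn*L*Cz*lam₀))) = r/4 := by
          field_simp
        rw [heq]
        calc (sn * L * Cz * lam₀) * (P ^ t) * ((lam₀ / ((t:ℝ) + 1) ^ ν / ((t:ℝ) + 1)) / lam₀)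
            ≤ (sn * L * Cz * lam₀) * (P ^ t) * 1 :=
              mul_le_mul_of_nonneg_left h1 (by positivity)
          _ ≤ r/4 := by rw [mul_one]; linarith only [h2, h3]
      have hPc2' : 0 ≤ sn * L * Cz * P ^ t * (lam₀ / ((t:ℝ) + 1) ^ ν) / ((t:ℝ) + 1) := by
        positivity
      have hψt := hψpos t
      have hψt1 := hψpos (t+1)
      -- forcing terms
      have hFa : 2 * dl * (lam₀ / ((t:ℝ) + 1) ^ ν) / ((t:ℝ) + 1) = 2*dl*lam₀ * ψ t := by
        rw [show 2 * dl * (lam₀ / ((t:ℝ) + 1) ^ ν) / ((t:ℝ) + 1)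
            = 2 * dl * (lam₀ / ((t:ℝ) + 1) ^ ν / ((t:ℝ) + 1)) from by ring, hlamψ t]
        ring
      have hFb : 2 * dl * Cz * P ^ t * (lam₀ / ((t:ℝ) + 1) ^ ν) / ((t:ℝ) + 1)
          ≤ 2*dl*Cz*lam₀ * ψ t := by
        rw [show 2 * dl * Cz * P ^ t * (lam₀ / ((t:ℝ) + 1) ^ ν) / ((t:ℝ) + 1)
            = 2 * dl * Cz * P ^ t * (lam₀ / ((t:ℝ) + 1) ^ ν / ((t:ℝ) + 1)) from by ring,
          hlamψ t]
        calc 2 * dl * Cz * P ^ t * (lam₀ * ψ t)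
            = (2 * dl * Cz * lam₀ * ψ t) * P ^ t := by ring
          _ ≤ (2 * dl * Cz * lam₀ * ψ t) * 1 := by
              apply mul_le_mul_of_nonneg_left hPt1'
              have := hψt.le
              positivity
          _ = 2*dl*Cz*lam₀ * ψ t := by ring
      -- ratio bound : ψ t ≤ (1+m) * ψ (t+1)
      have hratio : ψ t ≤ (1+m) * ψ (t+1) := by
        have hX0 : (0:ℝ) < ((t:ℝ)+1) ^ (1+ν) := Real.rpow_pos_of_pos (ht1 t) (1+ν)
        have hY0 : (0:ℝ) < ((t:ℝ)+2) ^ (1+ν) := Real.rpow_pos_of_pos (by positivity) (1+ν)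
        have hq1 : (1:ℝ) ≤ ((t:ℝ)+2)/((t:ℝ)+1) := by
          rw [le_div_iff₀ (ht1 t)]; linarith
        have hsplit : ((t:ℝ)+2) ^ (1+ν)
            = (((t:ℝ)+2)/((t:ℝ)+1)) ^ (1+ν) * (((t:ℝ)+1)) ^ (1+ν) := by
          rw [← Real.mul_rpow (by positivity) (ht1 t).le]
          congr 1
          field_simp
        have hexp : (((t:ℝ)+2)/((t:ℝ)+1)) ^ (1+ν) ≤ (((t:ℝ)+2)/((t:ℝ)+1)) ^ (2:ℝ) :=
          Real.rpow_le_rpow_of_exponent_le hq1 (by linarith)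
        have hsq : (((t:ℝ)+2)/((t:ℝ)+1)) ^ (2:ℝ) = (((t:ℝ)+2)/((t:ℝ)+1)) ^ (2:ℕ) := by
          rw [← Real.rpow_natCast]
          norm_num
        obtain ⟨y, hy_def⟩ : ∃ y : ℝ, y = 1/((t:ℝ)+1) := ⟨_, rfl⟩
        have hyb : ((t:ℝ)+2)/((t:ℝ)+1) = 1 + y := by
          rw [hy_def]
          field_simp
          ring
        have h0 : (0:ℝ) ≤ y := by rw [hy_def]; positivity
        have h1inv : y ≤ 1 := by
          rw [hy_def, div_le_one (ht1 t)]; linarith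
        have h3m : 3*y ≤ m := by
          rw [hy_def, show 3*(1/((t:ℝ)+1)) = 3/((t:ℝ)+1) from by ring,
            div_le_iff₀ (ht1 t)]
          have hle : 3/m ≤ (t:ℝ) := le_trans hN₁ htN₁
          have h' : 3/m * m ≤ (t:ℝ) * m := mul_le_mul_of_nonneg_right hle hm0.le
          rw [div_mul_cancel₀ _ hm0.ne'] at h'
          linarith only [h', hm0]
        have hqm : (((t:ℝ)+2)/((t:ℝ)+1)) ^ (1+ν) ≤ 1 + m := by
          rw [hsq, hyb] at hexp
          have hy2 : y * y ≤ y := mul_le_of_le_one_right h0 h1inv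
          have h2 : (1 + y) ^ (2:ℕ) ≤ 1 + 3*y := by
            have hexpand : (1 + y) ^ (2:ℕ) = 1 + 2*y + y*y := by ring
            rw [hexpand]
            linarith only [hy2]
          rw [hyb]
          exact le_trans hexp (by linarith only [h2, h3m])
        have hXY : ((t:ℝ)+2) ^ (1+ν) ≤ (1+m) * ((t:ℝ)+1) ^ (1+ν) := by
          rw [hsplit]
          exact mul_le_mul_of_nonneg_right hqm hX0.le
        simp only [hψ_def]
        push_cast
        rw [show ((t:ℝ) + 1 + 1) = (t:ℝ) + 2 from by ring]
        rw [show (1+m) * (((t:ℝ)+2) ^ (1+ν))⁻¹ = (1+m) / (((t:ℝ)+2) ^ (1+ν)) from by ring,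
          show ((((t:ℝ)+1) ^ (1+ν))⁻¹ : ℝ) = 1 / (((t:ℝ)+1) ^ (1+ν)) from by ring,
          div_le_div_iff₀ hX0 hY0]
        linarith only [hXY]
      -- a step
      have ha_next : a (t+1) ≤ A * ψ (t+1) := by
        have h1 : a (t+1) ≤ ((1-c)*A + δ*B + 2*dl*lam₀) * ψ t := by
          have h2 : (1 - c) * a t ≤ (1-c) * (A * ψ t) :=
            mul_le_mul_of_nonneg_left iha (by linarith)
          have h3 : (sn * L * (t:ℝ) * (lam₀ / ((t:ℝ) + 1) ^ ν) / ((t:ℝ) + 1)) * b t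
              ≤ δ * (B * ψ t) := by
            calc (sn * L * (t:ℝ) * (lam₀ / ((t:ℝ) + 1) ^ ν) / ((t:ℝ) + 1)) * b t
                ≤ δ * b t := mul_le_mul_of_nonneg_right hεt (hb t)
              _ ≤ δ * (B * ψ t) := mul_le_mul_of_nonneg_left ihb hδ0.le
          have h4 := hreca t
          rw [hFa] at h4
          have heq : ((1-c)*A + δ*B + 2*dl*lam₀) * ψ t
              = (1-c) * (A * ψ t) + δ * (B * ψ t) + 2*dl*lam₀ * ψ t := by ring
          rw [heq]
          linarith only [h2, h3, h4]
        have hc10 : (0:ℝ) ≤ (1-c)*A := mul_nonneg (by linarith) hA0.le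
        have hδB : (0:ℝ) < δ*B := mul_pos hδ0 hB0
        have hdlam : (0:ℝ) < dl*lam₀ := mul_pos hdl hlam₀
        calc a (t+1) ≤ ((1-c)*A + δ*B + 2*dl*lam₀) * ψ t := h1
          _ ≤ ((1-c)*A + δ*B + 2*dl*lam₀) * ((1+m) * ψ (t+1)) := by
              apply mul_le_mul_of_nonneg_left hratio
              linarith only [hc10, hδB, hdlam]
          _ = ((1-c)*(1+m)*A + (1+m)*(δ*B) + (1+m)*(2*(dl*lam₀))) * ψ (t+1) := by ring
          _ ≤ ((1 - c/2)*A + 2*(δ*B) + 2*(2*(dl*lam₀))) * ψ (t+1) := by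
              apply mul_le_mul_of_nonneg_right _ hψt1.le
              have hh1 : (1-c)*(1+m) ≤ 1 - c/2 := by
                have hcm : 0 ≤ c*m := mul_nonneg hc0.le hm0.le
                linarith only [hmc, hcm]
              have hh2 : (1-c)*(1+m)*A ≤ (1 - c/2)*A :=
                mul_le_mul_of_nonneg_right hh1 hA0.le
              have hh3 : (1+m)*(δ*B) ≤ 2*(δ*B) :=
                mul_le_mul_of_nonneg_right (by linarith only [hm2]) hδB.le
              have hh4 : (1+m)*(2*(dl*lam₀)) ≤ 2*(2*(dl*lam₀)) :=
                mul_le_mul_of_nonneg_right (by linarith only [hm2]) (by linarith only [hdlam])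
              linarith only [hh2, hh3, hh4]
          _ ≤ A * ψ (t+1) := by
              apply mul_le_mul_of_nonneg_right _ hψt1.le
              linarith only [hA_key]
      refine ⟨ha_next, ?_⟩
      -- b step
      have h1 : b (t+1) ≤ ((1-3*r/4)*B + uu*A + 2*(dl*Cz*lam₀)) * ψ t := by
        have hb1 : (1 - r + sn * L * Cz * P ^ t * (lam₀ / ((t:ℝ) + 1) ^ ν) / ((t:ℝ) + 1)) * b t
            ≤ (1 - 3*r/4) * (B * ψ t) := by
          apply mul_le_mul (by linarith only [hPc2]) ihb (hb t) (by linarith)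
        have hb2 : ((2 - c) * Cz * P ^ t + 1 / u) * a t ≤ (1 + 1/u) * (A * ψ t) := by
          apply mul_le_mul (by linarith only [hPc1]) iha (ha t) (by positivity)
        have hb3 : (1 / u) * a (t+1) ≤ (1/u) * (A * ψ t) := by
          have hstep : a (t+1) ≤ A * ψ t := le_trans ha_next
            (mul_le_mul_of_nonneg_left (hψdec t) hA0.le)
          exact mul_le_mul_of_nonneg_left hstep (by positivity)
        have h4 := hrecb t
        have heq : ((1-3*r/4)*B + uu*A + 2*(dl*Cz*lam₀)) * ψ t
            = (1 - 3*r/4) * (B * ψ t) + (1 + 1/u) * (A * ψ t)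
              + (1/u) * (A * ψ t) + 2*dl*Cz*lam₀ * ψ t := by
          rw [huu_def]; ring
        rw [heq]
        linarith only [h4, hb1, hb2, hb3, hFb]
      have hB34 : (0:ℝ) ≤ (1-3*r/4)*B := mul_nonneg (by linarith) hB0.le
      calc b (t+1) ≤ ((1-3*r/4)*B + uu*A + 2*(dl*Cz*lam₀)) * ψ t := h1
        _ ≤ ((1-3*r/4)*B + uu*A + 2*(dl*Cz*lam₀)) * ((1+m) * ψ (t+1)) := by
            apply mul_le_mul_of_nonneg_left hratio
            linarith only [hB34, huuA, hdCl]
        _ = ((1-3*r/4)*(1+m)*B + (1+m)*(uu*A) + (1+m)*(2*(dl*Cz*lam₀))) * ψ (t+1) := by ring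
        _ ≤ ((1 - r/2)*B + 2*(uu*A) + 2*(2*(dl*Cz*lam₀))) * ψ (t+1) := by
            apply mul_le_mul_of_nonneg_right _ hψt1.le
            have hh1 : (1-3*r/4)*(1+m) ≤ 1 - r/2 := by
              have hrm : 0 ≤ r*m := mul_nonneg hr0.le hm0.le
              linarith only [hmr, hrm]
            have hh2 : (1-3*r/4)*(1+m)*B ≤ (1 - r/2)*B :=
              mul_le_mul_of_nonneg_right hh1 hB0.le
            have hh3 : (1+m)*(uu*A) ≤ 2*(uu*A) :=
              mul_le_mul_of_nonneg_right (by linarith only [hm2]) huuA.le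
            have hh4 : (1+m)*(2*(dl*Cz*lam₀)) ≤ 2*(2*(dl*Cz*lam₀)) :=
              mul_le_mul_of_nonneg_right (by linarith only [hm2]) (by linarith only [hdCl])
            linarith only [hh2, hh3, hh4]
        _ ≤ B * ψ (t+1) := by
            apply mul_le_mul_of_nonneg_right _ hψt1.le
            linarith only [hBr]
  -- assemble the final constant
  obtain ⟨C, hC_def⟩ : ∃ x : ℝ, x = (A + B) + ∑ s ∈ Finset.range T, (a s + b s) / ψ s := ⟨_, rfl⟩
  have hsum0 : (0:ℝ) ≤ ∑ s ∈ Finset.range T, (a s + b s) / ψ s := by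
    apply Finset.sum_nonneg
    intro s _
    exact div_nonneg (by linarith [ha s, hb s]) (hψpos s).le
  have hC0 : 0 < C := by
    have hAB0 : 0 < A + B := by linarith only [hA0, hB0]
    rw [hC_def]; linarith only [hAB0, hsum0]
  refine ⟨C, hC0, ?_⟩
  intro t
  have hgoal : a t + b t ≤ C * ψ t := by
    rcases le_or_gt T t with h | h
    · obtain ⟨h1, h2⟩ := main t h
      have hAB_le_C : A + B ≤ C := by rw [hC_def]; linarith only [hsum0]
      have h3 : a t + b t ≤ (A + B) * ψ t := by
        have heq : (A + B) * ψ t = A * ψ t + B * ψ t := by ring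
        linarith only [h1, h2, heq]
      calc a t + b t ≤ (A + B) * ψ t := h3
        _ ≤ C * ψ t := mul_le_mul_of_nonneg_right hAB_le_C (hψpos t).le
    · have hmem : t ∈ Finset.range T := Finset.mem_range.2 h
      have h1 : (a t + b t) / ψ t ≤ ∑ s ∈ Finset.range T, (a s + b s) / ψ s := by
        apply Finset.single_le_sum (f := fun s => (a s + b s) / ψ s) _ hmem
        intro s _
        exact div_nonneg (by linarith [ha s, hb s]) (hψpos s).le
      have h2 : (a t + b t) / ψ t ≤ C := by
        have hAB0 : 0 < A + B := by linarith only [hA0, hB0]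
        rw [hC_def]
        linarith only [h1, hAB0]
      exact (div_le_iff₀ (hψpos t)).mp h2
  calc a t + b t ≤ C * ψ t := hgoal
    _ = C / ((t:ℝ) + 1) ^ (1 + ν) := by simp only [hψ_def]; rw [div_eq_mul_inv]
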